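/- Let p be a prime and 0 ≤ m ≤ n, and let N be the number of m-dimensional ZMod p-subspaces W of (ZMod p)^{2n} that are self-orthogonal with respect to the symplectic inner product, i.e., W ⊆ W^⊥. Then N · Π_{i=0}^{m−1} (p^m − p^i) = Π_{i=0}^{m−1} (p^{2n−i} − p^i); equivalently, N = Π_{i=0}^{m−1} (p^{2n−i} − p^i)/(p^m − p^i). -/

import Mathlib

open scoped BigOperators

/-- The phase space `(ZMod p)^n × (ZMod p)^n`, representing `(ZMod p)^{2n}`
written as pairs `(a|b)`. -/
abbrev PV (p n : ℕ) := (Fin n → ZMod p) × (Fin n → ZMod p)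

/-- The symplectic inner product `⟨x,y⟩ = ∑ i, (b i * c i - a i * d i)`
for `x = (a|b)`, `y = (c|d)`. -/
def symp {p n : ℕ} (x y : PV p n) : ZMod p :=
  ∑ i, (x.2 i * y.1 i - x.1 i * y.2 i)

/-- `ξ_1,…,ξ_n, η_1,…,η_n` form a hyperbolic basis of `(ZMod p)^{2n}`. -/
def IsHyperbolicBasis {p n : ℕ} (ξ η : Fin n → PV p n) : Prop :=
  LinearIndependent (ZMod p) (Sum.elim ξ η) ∧
  Submodule.span (ZMod p) (Set.range (Sum.elim ξ η)) = ⊤ ∧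
  (∀ i j, symp (ξ i) (η j) = if i = j then 1 else 0) ∧
  (∀ i j, symp (ξ i) (ξ j) = 0) ∧
  (∀ i j, symp (η i) (η j) = 0)

/-- Symplectic orthogonal complement `W^⊥` of a submodule `W`. -/
def sympOrtho {p n : ℕ} (W : Submodule (ZMod p) (PV p n)) :
    Submodule (ZMod p) (PV p n) where
  carrier := {y | ∀ x ∈ W, symp x y = 0}
  zero_mem' := by intro x hx; simp [symp]
  add_mem' := by
    intro a b ha hb x hx
    have h : symp x (a + b) = symp x a + symp x b := by
      unfold symp
      rw [← Finset.sum_add_distrib]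
      refine Finset.sum_congr rfl ?_
      intro i _
      simp only [Prod.fst_add, Prod.snd_add, Pi.add_apply]
      ring
    rw [h, ha x hx, hb x hx, add_zero]
  smul_mem' := by
    intro c a ha x hx
    have h : symp x (c • a) = c * symp x a := by
      unfold symp
      rw [Finset.mul_sum]
      refine Finset.sum_congr rfl ?_
      intro i _
      simp only [Prod.smul_fst, Prod.smul_snd, Pi.smul_apply, smul_eq_mul]
      ring
    rw [h, ha x hx, mul_zero]

/-- `ω = exp(2πi/p)`. -/
noncomputable def omg (p : ℕ) : ℂ := Complex.exp (2 * Real.pi * Complex.I / p)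

/-- The matrix `XZⁿ(v)` for `v = (a|b)`: entry `(r,c)` equals `ω^{b·c}`
if `r = c + a`, and `0` otherwise. -/
noncomputable def XZ {p n : ℕ} (v : PV p n) :
    Matrix (Fin n → ZMod p) (Fin n → ZMod p) ℂ :=
  fun r c => if r = c + v.1 then omg p ^ (∑ i, v.2 i * c i).val else 0

/-- The standard basis vector `δ_u`. -/
def delta {p n : ℕ} (u : Fin n → ZMod p) : (Fin n → ZMod p) → ℂ :=
  fun v => if v = u then 1 else 0

/-- Ordered product `∏_{i=1}^n (M i)^{u_i}` of matrices, powers via integer lifts. -/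
noncomputable def prodPow {p n : ℕ} [NeZero p]
    (M : Fin n → Matrix (Fin n → ZMod p) (Fin n → ZMod p) ℂ)
    (u : Fin n → ZMod p) : Matrix (Fin n → ZMod p) (Fin n → ZMod p) ℂ :=
  ((List.finRange n).map (fun i => (M i) ^ (u i).val)).prod

/-- Splice `e ∈ (ZMod p)^{n-k}` and `x ∈ (ZMod p)^k` into a vector of `(ZMod p)^n`,
identifying `(ZMod p)^n` with `(ZMod p)^{n-k} × (ZMod p)^k`. -/
def splice {p n k : ℕ} (hk : k ≤ n) (e : Fin (n - k) → ZMod p)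
    (x : Fin k → ZMod p) : Fin n → ZMod p :=
  fun i => Fin.append e x (Fin.cast (by omega) i)

/-- The index `n - k + i` of `Fin n`, for `i : Fin k`. -/
def lastIdx {n k : ℕ} (hk : k ≤ n) (i : Fin k) : Fin n :=
  ⟨n - k + i.1, by have := i.2; omega⟩

/-- Kronecker (tensor) product of two vectors. -/
def vecKron {ι : Type*} (f g : ι → ℂ) : ι × ι → ℂ := fun q => f q.1 * g q.2

/-- Entrywise complex conjugate of a vector. -/
def conjVec {ι : Type*} (f : ι → ℂ) : ι → ℂ := fun i => (starRingEnd ℂ) (f i)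

section Aux

open LinearMap Module Submodule

variable {p n : ℕ}

lemma symp_add_left (x y z : PV p n) : symp (x + y) z = symp x z + symp y z := by
  unfold symp; rw [← Finset.sum_add_distrib]
  refine Finset.sum_congr rfl fun i _ => ?_
  simp only [Prod.fst_add, Prod.snd_add, Pi.add_apply]; ring

lemma symp_smul_left (c : ZMod p) (x y : PV p n) : symp (c • x) y = c * symp x y := by
  unfold symp; rw [Finset.mul_sum]
  refine Finset.sum_congr rfl fun i _ => ?_
  simp only [Prod.smul_fst, Prod.smul_snd, Pi.smul_apply, smul_eq_mul]; ring

lemma symp_add_right (x y z : PV p n) : symp x (y + z) = symp x y + symp x z := by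
  unfold symp; rw [← Finset.sum_add_distrib]
  refine Finset.sum_congr rfl fun i _ => ?_
  simp only [Prod.fst_add, Prod.snd_add, Pi.add_apply]; ring

lemma symp_smul_right (c : ZMod p) (x y : PV p n) : symp x (c • y) = c * symp x y := by
  unfold symp; rw [Finset.mul_sum]
  refine Finset.sum_congr rfl fun i _ => ?_
  simp only [Prod.smul_fst, Prod.smul_snd, Pi.smul_apply, smul_eq_mul]; ring

def sympB (p n : ℕ) : LinearMap.BilinForm (ZMod p) (PV p n) :=
  LinearMap.mk₂ (ZMod p) symp symp_add_left
    (by intro c x y; rw [symp_smul_left]; rfl)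
    symp_add_right
    (by intro c x y; rw [symp_smul_right]; rfl)

lemma sympB_apply (x y : PV p n) : sympB p n x y = symp x y := rfl

lemma symp_self (x : PV p n) : symp x x = 0 := by
  unfold symp; exact Finset.sum_eq_zero fun i _ => by ring

lemma symp_antisymm (x y : PV p n) : symp y x = - symp x y := by
  have : symp y x + symp x y = 0 := by
    unfold symp; rw [← Finset.sum_add_distrib]
    exact Finset.sum_eq_zero fun i _ => by ring
  exact eq_neg_of_add_eq_zero_left this

lemma sympB_refl : (sympB p n).IsRefl := by
  intro x y h
  rw [sympB_apply] at h ⊢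
  rw [symp_antisymm, h, neg_zero]

lemma symp_single_right1 (x : PV p n) (j : Fin n) :
    symp x ((Pi.single j 1 : Fin n → ZMod p), (0 : Fin n → ZMod p)) = x.2 j := by
  unfold symp
  simp [Pi.single_apply, mul_ite, Finset.sum_ite_eq']

lemma symp_single_right2 (x : PV p n) (j : Fin n) :
    symp x ((0 : Fin n → ZMod p), (Pi.single j 1 : Fin n → ZMod p)) = - x.1 j := by
  unfold symp
  simp [Pi.single_apply, mul_ite, Finset.sum_ite_eq']

lemma sympB_nondeg : (sympB p n).Nondegenerate := by
  refine (LinearMap.IsRefl.nondegenerate_iff_separatingLeft (B := sympB p n) (fun x y h => sympB_refl x y h)).mpr ?_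
  intro x hx
  have h2 : x.2 = 0 := by
    funext j
    have := hx ((Pi.single j 1 : Fin n → ZMod p), 0)
    rwa [sympB_apply, symp_single_right1] at this
  have h1 : x.1 = 0 := by
    funext j
    have := hx ((0 : Fin n → ZMod p), (Pi.single j 1 : Fin n → ZMod p))
    rw [sympB_apply, symp_single_right2] at this
    exact neg_eq_zero.mp this
  exact Prod.ext h1 h2

lemma finrank_PV [Fact p.Prime] : finrank (ZMod p) (PV p n) = 2 * n := by
  rw [Module.finrank_prod, Module.finrank_pi, Fintype.card_fin]
  omega

lemma card_submodule [Fact p.Prime] (W : Submodule (ZMod p) (PV p n)) :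
    Nat.card W = p ^ finrank (ZMod p) W := by
  letI : Fintype W := Fintype.ofFinite W
  rw [Nat.card_eq_fintype_card, card_eq_pow_finrank (K := ZMod p), ZMod.card]

lemma span_le_ortho {k : ℕ} (v : Fin k → PV p n) (h : ∀ i j, symp (v i) (v j) = 0) :
    Submodule.span (ZMod p) (Set.range v) ≤
      (sympB p n).orthogonal (Submodule.span (ZMod p) (Set.range v)) := by
  rw [Submodule.span_le]
  rintro _ ⟨i, rfl⟩
  rw [SetLike.mem_coe, LinearMap.BilinForm.mem_orthogonal_iff]
  intro x hx
  have hker : Submodule.span (ZMod p) (Set.range v) ≤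
      LinearMap.ker ((sympB p n).flip (v i)) := by
    rw [Submodule.span_le]
    rintro _ ⟨j, rfl⟩
    rw [SetLike.mem_coe, LinearMap.mem_ker]
    exact h j i
  exact hker hx

lemma sympOrtho_eq (W : Submodule (ZMod p) (PV p n)) :
    sympOrtho W = (sympB p n).orthogonal W := rfl

abbrev IsoTuple (p n k : ℕ) : Type :=
  {v : Fin k → PV p n //
    LinearIndependent (ZMod p) v ∧ ∀ i j, symp (v i) (v j) = 0}

abbrev Fib {k : ℕ} (v : IsoTuple p n k) : Type :=
  {w : PV p n //
    w ∈ (sympB p n).orthogonal (Submodule.span (ZMod p) (Set.range v.1)) ∧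
    w ∉ Submodule.span (ZMod p) (Set.range v.1)}

lemma card_fiber (S P : Submodule (ZMod p) (PV p n)) (h : S ≤ P) [Fact p.Prime] :
    Nat.card {w : PV p n // w ∈ P ∧ w ∉ S} =
      p ^ finrank (ZMod p) P - p ^ finrank (ZMod p) S := by
  have e : {w : PV p n // w ∈ P ∧ w ∉ S} ≃ ((P : Set (PV p n)) \ (S : Set (PV p n)) : Set (PV p n)) :=
    Equiv.subtypeEquivRight (fun x => by simp [Set.mem_diff])
  rw [Nat.card_congr e, Nat.card_coe_set_eq,
    Set.ncard_diff h (Set.toFinite _), ← Nat.card_coe_set_eq, ← Nat.card_coe_set_eq]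
  rw [show Nat.card ((P : Set (PV p n))) = Nat.card P from rfl,
    show Nat.card ((S : Set (PV p n))) = Nat.card S from rfl,
    card_submodule, card_submodule]


variable [Fact p.Prime]

lemma my_snoc {k : ℕ} (v : Fin k → PV p n) (w : PV p n) :
    LinearIndependent (ZMod p) (Fin.snoc v w : Fin (k + 1) → PV p n) ↔
      LinearIndependent (ZMod p) v ∧ w ∉ Submodule.span (ZMod p) (Set.range v) :=
  linearIndependent_fin_snoc

def stepTo {k : ℕ} (u : IsoTuple p n (k + 1)) : Σ v : IsoTuple p n k, Fib v :=
  ⟨⟨Fin.init u.1,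
    u.2.1.comp Fin.castSucc (Fin.castSucc_injective k),
    fun i j => u.2.2 i.castSucc j.castSucc⟩,
   ⟨u.1 (Fin.last k),
    by
      rw [LinearMap.BilinForm.mem_orthogonal_iff]
      intro x hx
      have hker : Submodule.span (ZMod p) (Set.range (Fin.init u.1)) ≤
          LinearMap.ker ((sympB p n).flip (u.1 (Fin.last k))) := by
        rw [Submodule.span_le]
        rintro _ ⟨j, rfl⟩
        rw [SetLike.mem_coe, LinearMap.mem_ker]
        exact u.2.2 j.castSucc (Fin.last k)
      exact hker hx,
    by
      have h := u.2.1
      rw [← Fin.snoc_init_self u.1, my_snoc] at h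
      exact h.2⟩⟩

def stepInv {k : ℕ} (v : IsoTuple p n k) (w : Fib v) : IsoTuple p n (k + 1) :=
  ⟨Fin.snoc v.1 w.1,
   (my_snoc v.1 w.1).mpr ⟨v.2.1, w.2.2⟩,
   by
    have hvw : ∀ a : Fin k, symp (v.1 a) w.1 = 0 := fun a =>
      (LinearMap.BilinForm.mem_orthogonal_iff.mp w.2.1) (v.1 a)
        (Submodule.subset_span (Set.mem_range_self a))
    intro i j
    induction i using Fin.lastCases with
    | last =>
      induction j using Fin.lastCases with
      | last => simp only [Fin.snoc_last]; exact symp_self w.1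
      | cast j =>
        simp only [Fin.snoc_last, Fin.snoc_castSucc]
        rw [symp_antisymm, hvw j, neg_zero]
    | cast i =>
      induction j using Fin.lastCases with
      | last => simp only [Fin.snoc_last, Fin.snoc_castSucc]; exact hvw i
      | cast j => simp only [Fin.snoc_castSucc]; exact v.2.2 i j⟩

def stepEquiv (k : ℕ) : IsoTuple p n (k + 1) ≃ Σ v : IsoTuple p n k, Fib v where
  toFun := stepTo
  invFun vw := stepInv vw.1 vw.2
  left_inv u := Subtype.ext (Fin.snoc_init_self u.1)
  right_inv := by
    rintro ⟨v, w⟩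
    show stepTo (stepInv v w) = ⟨v, w⟩
    have h1 : ((stepTo (stepInv v w)).1 : Fin k → PV p n) = v.1 := by
      show Fin.init (Fin.snoc v.1 w.1 : Fin (k + 1) → PV p n) = v.1
      simp
    refine Sigma.ext (Subtype.ext h1) ?_
    refine (Subtype.heq_iff_coe_eq ?_).mpr ?_
    · intro x
      rw [h1]
    · show (Fin.snoc v.1 w.1 : Fin (k + 1) → PV p n) (Fin.last k) = w.1
      simp

set_option maxHeartbeats 2000000 in
lemma card_Fib {k : ℕ} (v : IsoTuple p n k) :
    Nat.card (Fib v) = p ^ (2 * n - k) - p ^ k := by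
  have h1 : finrank (ZMod p) (Submodule.span (ZMod p) (Set.range v.1)) = k := by
    rw [finrank_span_eq_card v.2.1, Fintype.card_fin]
  have h2 : finrank (ZMod p)
      ((sympB p n).orthogonal (Submodule.span (ZMod p) (Set.range v.1))) = 2 * n - k := by
    rw [LinearMap.BilinForm.finrank_orthogonal sympB_nondeg, finrank_PV, h1]
  have := card_fiber (Submodule.span (ZMod p) (Set.range v.1))
    ((sympB p n).orthogonal (Submodule.span (ZMod p) (Set.range v.1)))
    (span_le_ortho v.1 v.2.2)
  rw [h1, h2] at this
  exact this

lemma card_isoTuple (k : ℕ) :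
    Nat.card (IsoTuple p n k) = ∏ i ∈ Finset.range k, (p ^ (2 * n - i) - p ^ i) := by
  induction k with
  | zero =>
    rw [Finset.range_zero, Finset.prod_empty]
    haveI : Unique (IsoTuple p n 0) :=
      { default := ⟨fun i => i.elim0, linearIndependent_empty_type, fun i _ => i.elim0⟩,
        uniq := fun a => Subtype.ext (funext fun i => i.elim0) }
    exact Nat.card_unique
  | succ k ih =>
    letI : Fintype (IsoTuple p n k) := Fintype.ofFinite _
    letI : ∀ v : IsoTuple p n k, Fintype (Fib v) := fun v => Fintype.ofFinite _
    rw [Nat.card_congr (stepEquiv k), Nat.card_eq_fintype_card, Fintype.card_sigma]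
    have h : ∀ v : IsoTuple p n k, Fintype.card (Fib v) = p ^ (2 * n - k) - p ^ k := fun v => by
      rw [← Nat.card_eq_fintype_card, card_Fib]
    rw [Finset.sum_congr rfl (fun v _ => h v), Finset.sum_const, Finset.card_univ, smul_eq_mul,
      ← Nat.card_eq_fintype_card, ih, Finset.prod_range_succ]

lemma mem_sympOrtho_iff {W : Submodule (ZMod p) (PV p n)} {y : PV p n} :
    y ∈ sympOrtho W ↔ ∀ x ∈ W, symp x y = 0 := Iff.rfl

instance : Finite (Submodule (ZMod p) (PV p n)) :=
  Finite.of_injective (fun W => (W : Set (PV p n))) SetLike.coe_injective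

set_option maxHeartbeats 2000000 in
def toSub (m : ℕ) (v : IsoTuple p n m) :
    {W : Submodule (ZMod p) (PV p n) //
      finrank (ZMod p) W = m ∧ W ≤ sympOrtho W} :=
  ⟨Submodule.span (ZMod p) (Set.range v.1),
   by rw [finrank_span_eq_card v.2.1, Fintype.card_fin],
   by rw [sympOrtho_eq]; exact span_le_ortho v.1 v.2.2⟩

set_option maxHeartbeats 2000000 in
def fiberEquiv (m : ℕ)
    (W : {W : Submodule (ZMod p) (PV p n) //
      finrank (ZMod p) W = m ∧ W ≤ sympOrtho W}) :
    {v : IsoTuple p n m // toSub m v = W} ≃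
      {s : Fin m → W.1 // LinearIndependent (ZMod p) s} where
  toFun vh :=
    ⟨fun i => ⟨vh.1.1 i, by
        have h : Submodule.span (ZMod p) (Set.range vh.1.1) = W.1 :=
          congrArg Subtype.val vh.2
        exact h ▸ Submodule.subset_span (Set.mem_range_self i)⟩,
     LinearIndependent.of_comp W.1.subtype vh.1.2.1⟩
  invFun sh :=
    ⟨⟨fun i => (sh.1 i : PV p n),
      sh.2.map' W.1.subtype (Submodule.ker_subtype W.1),
      fun i j => (mem_sympOrtho_iff.mp (W.2.2 (sh.1 j).2)) _ (sh.1 i).2⟩,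
     Subtype.ext (by
      have htop : Submodule.span (ZMod p) (Set.range sh.1) = ⊤ :=
        Submodule.eq_top_of_finrank_eq
          (by rw [finrank_span_eq_card sh.2, Fintype.card_fin, W.2.1])
      show Submodule.span (ZMod p) (Set.range fun i => ((sh.1 i : PV p n))) = W.1
      calc Submodule.span (ZMod p) (Set.range fun i => ((sh.1 i : PV p n)))
          = Submodule.map W.1.subtype (Submodule.span (ZMod p) (Set.range sh.1)) := by
            rw [Submodule.map_span, ← Set.range_comp]; rfl
        _ = Submodule.map W.1.subtype ⊤ := by rw [htop]
        _ = W.1 := Submodule.map_subtype_top W.1)⟩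
  left_inv vh := Subtype.ext (Subtype.ext (funext fun i => rfl))
  right_inv sh := Subtype.ext (funext fun i => Subtype.ext rfl)

set_option maxHeartbeats 2000000 in
lemma main_count (m : ℕ) :
    Nat.card (IsoTuple p n m) =
      Nat.card {W : Submodule (ZMod p) (PV p n) //
        finrank (ZMod p) W = m ∧ W ≤ sympOrtho W} *
        ∏ i ∈ Finset.range m, (p ^ m - p ^ i) := by
  letI : Fintype {W : Submodule (ZMod p) (PV p n) //
      finrank (ZMod p) W = m ∧ W ≤ sympOrtho W} := Fintype.ofFinite _
  letI : ∀ W, Fintype {v : IsoTuple p n m // toSub m v = W} := fun W => Fintype.ofFinite _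
  rw [Nat.card_congr (Equiv.sigmaFiberEquiv (toSub (p := p) (n := n) m)).symm,
    Nat.card_eq_fintype_card, Fintype.card_sigma]
  have h : ∀ W, Fintype.card {v : IsoTuple p n m // toSub m v = W} =
      ∏ i ∈ Finset.range m, (p ^ m - p ^ i) := fun W => by
    rw [← Nat.card_eq_fintype_card, Nat.card_congr (fiberEquiv m W),
      card_linearIndependent (K := ZMod p) (le_of_eq W.2.1.symm)]
    rw [ZMod.card, W.2.1, ← Fin.prod_univ_eq_prod_range]
  rw [Finset.sum_congr rfl (fun W _ => h W), Finset.sum_const, Finset.card_univ, smul_eq_mul,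
    ← Nat.card_eq_fintype_card]

end Aux

/-- the number `N` of `m`-dimensional self-orthogonal subspaces of
`(ZMod p)^{2n}` satisfies `N · ∏_{i=0}^{m-1} (p^m - p^i) = ∏_{i=0}^{m-1} (p^{2n-i} - p^i)`. -/
theorem stmt17 (p n m : ℕ) [Fact p.Prime] (hm : m ≤ n) :
    Nat.card {W : Submodule (ZMod p) (PV p n) //
        Module.finrank (ZMod p) W = m ∧ W ≤ sympOrtho W} *
      ∏ i ∈ Finset.range m, (p ^ m - p ^ i) =
    ∏ i ∈ Finset.range m, (p ^ (2 * n - i) - p ^ i) := by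
  exact (main_count m).symm.trans (card_isoTuple m)
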